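/- arXiv:2303.05158 — 3 statements merged into one kernel-verified Lean document; each statement's English description precedes it below -/
import Mathlib

section
/- Let f : ℝ^n × ℝ^m → ℝ^n be a smooth submersion and let F = (F_x, F_u) be a flat parametrization of f of order r ≥ 1 which is of minimal order, i.e., f admits no flat parametrization of order r' < r. Then F_u depends nontrivially on the highest shift y_r: it is not the case that the partial derivative of F_u with respect to its last ℝ^m-block vanishes identically on (ℝ^m)^{r+1}. -/
/-- A flat parametrization of order `r` of the discrete-time system `x₊ = f (x, u)`:
a smooth submersion `F = (Fx, Fu) : (ℝᵐ)^{r+1} → ℝⁿ × ℝᵐ` such that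
`Fx (y₁, …, y_{r+1}) = f (Fx (y₀, …, y_r), Fu (y₀, …, y_r))` holds identically. -/
def IsFlatParametrization (n m : ℕ) (f : (Fin n → ℝ) × (Fin m → ℝ) → Fin n → ℝ) (r : ℕ)
    (F : (Fin (r + 1) → Fin m → ℝ) → (Fin n → ℝ) × (Fin m → ℝ)) : Prop :=
  ContDiff ℝ (⊤ : ℕ∞) F ∧
  (∀ y : Fin (r + 1) → Fin m → ℝ, Function.Surjective ⇑(fderiv ℝ F y)) ∧
  (∀ y : Fin (r + 2) → Fin m → ℝ,
    (F (fun i => y i.succ)).1 = f (F (fun i => y i.castSucc)))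

/-- Let `f` be a smooth submersion and `F = (Fx, Fu)` a flat parametrization of `f` of minimal
order `r ≥ 1` (i.e. `f` admits no flat parametrization of order `r' < r`).  Then `Fu` depends
nontrivially on the highest shift `y_r`: it is not the case that the partial derivative of
`Fu` with respect to its last `ℝᵐ`-block vanishes identically. -/
theorem flat_parametrization_minimal_order_Fu_depends_on_last_block
    (n m r : ℕ) (hr : 1 ≤ r)
    (f : (Fin n → ℝ) × (Fin m → ℝ) → Fin n → ℝ)
    (hf : ContDiff ℝ (⊤ : ℕ∞) f)
    (hsub : ∀ p : (Fin n → ℝ) × (Fin m → ℝ), Function.Surjective ⇑(fderiv ℝ f p))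
    (F : (Fin (r + 1) → Fin m → ℝ) → (Fin n → ℝ) × (Fin m → ℝ))
    (hF : IsFlatParametrization n m f r F)
    (hmin : ∀ r' < r, ∀ F' : (Fin (r' + 1) → Fin m → ℝ) → (Fin n → ℝ) × (Fin m → ℝ),
      ¬ IsFlatParametrization n m f r' F') :
    ¬ (∀ y : Fin (r + 1) → Fin m → ℝ,
        fderiv ℝ (fun a => (F (Function.update y (Fin.last r) a)).2) (y (Fin.last r)) = 0) := by
  intro hcon
  obtain ⟨s, rfl⟩ : ∃ s, r = s + 1 := ⟨r - 1, by omega⟩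
  have hL : (1 : ℕ∞) ≤ (⊤ : ℕ∞) := le_top
  have hFd : Differentiable ℝ F := hF.1.differentiable (by simp)
  set L : Fin (s + 2) := Fin.last (s + 1) with hLdef
  -- the injection of the last block
  set ι : (Fin m → ℝ) →L[ℝ] (Fin (s + 2) → Fin m → ℝ) :=
    ContinuousLinearMap.pi (fun i => if i = L then ContinuousLinearMap.id ℝ (Fin m → ℝ) else 0)
    with hι
  have hιapp : ∀ (c : Fin m → ℝ) (i : Fin (s + 2)), ι c i = if i = L then c else 0 := by
    intro c i
    by_cases h : i = L <;> simp [hι, h]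
  -- update as const + ι
  have hu : ∀ (p : Fin (s + 2) → Fin m → ℝ) (a : Fin m → ℝ),
      Function.update p L a = Function.update p L 0 + ι a := by
    intro p a
    funext i
    by_cases h : i = L <;> simp [Function.update_apply, h, hιapp]
  have hudiff : ∀ p : Fin (s + 2) → Fin m → ℝ,
      Differentiable ℝ (fun a : Fin m → ℝ => Function.update p L a) := by
    intro p
    have : (fun a : Fin m → ℝ => Function.update p L a)
        = fun a => Function.update p L 0 + ι a := funext (hu p)
    rw [this]
    exact (ι.differentiable).const_add _
  have hufd : ∀ (p : Fin (s + 2) → Fin m → ℝ) (a₀ : Fin m → ℝ),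
      fderiv ℝ (fun a => Function.update p L a) a₀ = ι := by
    intro p a₀
    have : (fun a : Fin m → ℝ => Function.update p L a)
        = fun a => Function.update p L 0 + ι a := funext (hu p)
    rw [this, fderiv_const_add, ι.fderiv]
  -- first components don't depend on the last block
  have hA : ∀ (y : Fin (s + 2) → Fin m → ℝ) (a : Fin m → ℝ),
      (F (Function.update y L a)).1 = (F y).1 := by
    intro y a
    have key : ∀ z : Fin (s + 2) → Fin m → ℝ,
        (F z).1 = f (F (fun i => (Fin.cons 0 z : Fin (s + 3) → Fin m → ℝ) i.castSucc)) := by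
      intro z
      have h := hF.2.2 (Fin.cons 0 z)
      have hz : (fun i : Fin (s + 2) =>
          (Fin.cons 0 z : Fin (s + 3) → Fin m → ℝ) i.succ) = z := by
        funext i; simp
      rwa [hz] at h
    have heq : (fun i : Fin (s + 2) =>
          (Fin.cons 0 (Function.update y L a) : Fin (s + 3) → Fin m → ℝ) i.castSucc)
        = (fun i : Fin (s + 2) => (Fin.cons 0 y : Fin (s + 3) → Fin m → ℝ) i.castSucc) := by
      funext i
      induction i using Fin.cases with
      | zero => simp
      | succ j =>
          have hcs : (j.succ : Fin (s + 2)).castSucc = ((j.castSucc : Fin (s + 2)).succ) := by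
            simp
          simp [hcs, Function.update_apply, (Fin.castSucc_lt_last j).ne, hLdef]
    rw [key, key y, heq]
  -- second components don't depend on the last block
  have hB : ∀ (y : Fin (s + 2) → Fin m → ℝ) (a : Fin m → ℝ),
      (F (Function.update y L a)).2 = (F y).2 := by
    intro y a
    have hgdiff : Differentiable ℝ (fun a : Fin m → ℝ => (F (Function.update y L a)).2) :=
      (hFd.snd).comp (hudiff y)
    have hg' : ∀ b, fderiv ℝ (fun a : Fin m → ℝ => (F (Function.update y L a)).2) b = 0 := by
      intro b
      have h := hcon (Function.update y L b)
      simpa [Function.update_idem] using h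
    have hcst := is_const_of_fderiv_eq_zero hgdiff hg' a (y L)
    simpa [Function.update_eq_self] using hcst
  have hFc : ∀ (y : Fin (s + 2) → Fin m → ℝ) (a : Fin m → ℝ),
      F (Function.update y L a) = F y := by
    intro y a
    exact Prod.ext (hA y a) (hB y a)
  -- derivative of F in the last-block direction vanishes
  have keyι : ∀ (p : Fin (s + 2) → Fin m → ℝ) (c : Fin m → ℝ), fderiv ℝ F p (ι c) = 0 := by
    intro p c
    have hconst : (F ∘ fun a : Fin m → ℝ => Function.update p L a) = fun _ => F p := by
      funext a; exact hFc p a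
    have h1 : fderiv ℝ (F ∘ fun a : Fin m → ℝ => Function.update p L a) (p L) = 0 := by
      rw [hconst]; exact fderiv_const_apply _
    have h2 : fderiv ℝ (F ∘ fun a : Fin m → ℝ => Function.update p L a) (p L)
        = (fderiv ℝ F p).comp ι := by
      rw [fderiv_comp (p L) (hFd.differentiableAt) ((hudiff p).differentiableAt)]
      rw [hufd p (p L), Function.update_eq_self]
    have h3 : (fderiv ℝ F p).comp ι = 0 := by rw [← h2, h1]
    calc fderiv ℝ F p (ι c) = ((fderiv ℝ F p).comp ι) c := rfl
      _ = 0 := by rw [h3]; rfl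
  -- the embedding of the first s+1 blocks
  set E : (Fin (s + 1) → Fin m → ℝ) →L[ℝ] (Fin (s + 2) → Fin m → ℝ) :=
    ContinuousLinearMap.pi (fun i =>
      Fin.lastCases 0 (fun j => ContinuousLinearMap.proj j) i) with hE
  have hEcs : ∀ (z : Fin (s + 1) → Fin m → ℝ) (j : Fin (s + 1)), E z j.castSucc = z j := by
    intro z j; simp [hE]
  have hEl : ∀ z : Fin (s + 1) → Fin m → ℝ, E z L = 0 := by
    intro z; simp [hE, hLdef]
  have hdecomp : ∀ w : Fin (s + 2) → Fin m → ℝ,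
      E (fun j => w j.castSucc) + ι (w L) = w := by
    intro w
    funext i
    induction i using Fin.lastCases with
    | last => simp [hEl, hιapp, hLdef]; exact hEl _
    | cast j => simp [hEcs, hιapp, (Fin.castSucc_lt_last j).ne, hLdef]
  have hEupd : ∀ y : Fin (s + 2) → Fin m → ℝ,
      E (fun j => y j.castSucc) = Function.update y L 0 := by
    intro y
    funext i
    induction i using Fin.lastCases with
    | last => simp [hEl, hLdef]; exact hEl _
    | cast j => simp [hEcs, Function.update_apply, (Fin.castSucc_lt_last j).ne, hLdef]
  -- the lower-order parametrization
  have hF'fd : ∀ z, fderiv ℝ (F ∘ ⇑E) z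
      = (fderiv ℝ F (E z)).comp (E : (Fin (s + 1) → Fin m → ℝ) →L[ℝ] _) := by
    intro z
    rw [fderiv_comp z (hFd.differentiableAt) (E.differentiableAt), E.fderiv]
  have hP : IsFlatParametrization n m f s (F ∘ ⇑E) := by
    refine ⟨hF.1.comp E.contDiff, ?_, ?_⟩
    · intro z v
      obtain ⟨w, hw⟩ := hF.2.1 (E z) v
      refine ⟨fun j => w j.castSucc, ?_⟩
      rw [hF'fd z]
      have h4 := congrArg (fderiv ℝ F (E z)) (hdecomp w)
      rw [map_add] at h4
      have h5 : fderiv ℝ F (E z) (ι (w L)) = 0 := keyι (E z) (w L)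
      calc ((fderiv ℝ F (E z)).comp E) (fun j => w j.castSucc)
          = fderiv ℝ F (E z) (E (fun j => w j.castSucc)) := rfl
        _ = fderiv ℝ F (E z) (E (fun j => w j.castSucc)) + fderiv ℝ F (E z) (ι (w L)) := by
            rw [h5, add_zero]
        _ = fderiv ℝ F (E z) w := h4
        _ = v := hw
    · intro y
      have h := hF.2.2 (Fin.snoc y 0)
      have c1 : (fun i : Fin (s + 2) => (Fin.snoc y 0 : Fin (s + 3) → Fin m → ℝ) i.succ)
          = E (fun j => y j.succ) := by
        funext i
        induction i using Fin.lastCases with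
        | last => simp [hEl, hLdef, Fin.succ_last]; exact (hEl _).symm
        | cast j => rw [hEcs, show (j.castSucc.succ : Fin (s + 3)) = j.succ.castSucc from by simp, Fin.snoc_castSucc]
      have c2 : (fun i : Fin (s + 2) =>
          (Fin.snoc y 0 : Fin (s + 3) → Fin m → ℝ) i.castSucc) = y := by
        funext i; simp
      rw [c1, c2] at h
      have c3 : F (E (fun i => y i.castSucc)) = F y := by
        rw [hEupd y]
        simpa using hFc y 0
      show (F (E (fun i => y i.succ))).1 = f (F (E (fun i => y i.castSucc)))
      rw [c3]
      exact h
  exact hmin s (by omega) (F ∘ ⇑E) hP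
end

section
/- Define h : ℝ^5 → ℝ^5 by h(x̃) = ( x̃^2, x̃^4, x̃^5−x̃^3−1, x̃^1+1, x̃^5 ) (a diffeomorphism of ℝ^5 with inverse h^{-1}(x) = (x^4−1, x^1, x^5−x^3−1, x^2, x^5)), and the input transformation u^1 = v, u^2 = w − x̃^4. Then for all x̃ with x̃^4 ≠ −1 and all (v,w) ∈ ℝ^2, the example system satisfies the identity h^{-1}( f( h(x̃), (v, w−x̃^4) ) ) = ( (−x̃^2(v+1)+x̃^5(x̃^4+1))/(x̃^4+1), x̃^4(v+1), −x̃^1+x̃^4−1, v, w ); i.e., in the new coordinates the system splits into the pure shift subsystem x̃^5_+ = w and a remaining 4-dimensional subsystem with inputs v and x̃^5. -/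
/-- The example system `f (x, u) = (x²(u¹+1), u¹, x⁴+u²−1, x⁵+1−x¹(u¹+1)/(x²+1), u²+x²)`
(indices shifted down by one), defined on `{(x, u) : x² ≠ −1}`. -/
noncomputable def exampleSystem : (Fin 5 → ℝ) × (Fin 2 → ℝ) → Fin 5 → ℝ := fun p =>
  ![p.1 1 * (p.2 0 + 1),
    p.2 0,
    p.1 3 + p.2 1 - 1,
    p.1 4 + 1 - p.1 0 * (p.2 0 + 1) / (p.1 1 + 1),
    p.2 1 + p.1 1]

/-- The state transformation `h (x̃) = (x̃², x̃⁴, x̃⁵ − x̃³ − 1, x̃¹ + 1, x̃⁵)`. -/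
noncomputable def hMap (xt : Fin 5 → ℝ) : Fin 5 → ℝ :=
  ![xt 1, xt 3, xt 4 - xt 2 - 1, xt 0 + 1, xt 4]

/-- The inverse state transformation `h⁻¹ (x) = (x⁴ − 1, x¹, x⁵ − x³ − 1, x², x⁵)`. -/
noncomputable def hInv (x : Fin 5 → ℝ) : Fin 5 → ℝ :=
  ![x 3 - 1, x 0, x 4 - x 2 - 1, x 1, x 4]

/-- `h` is a diffeomorphism of `ℝ⁵` with inverse `h⁻¹`, and with the input transformation
`u¹ = v`, `u² = w − x̃⁴` the example system satisfies, for all `x̃` with `x̃⁴ ≠ −1`,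
`h⁻¹ (f (h x̃, (v, w − x̃⁴))) = ((−x̃²(v+1) + x̃⁵(x̃⁴+1))/(x̃⁴+1), x̃⁴(v+1), −x̃¹+x̃⁴−1, v, w)`:
in the new coordinates the system splits into the pure shift subsystem `x̃⁵₊ = w` and a
remaining 4-dimensional subsystem with inputs `v` and `x̃⁵`. -/
theorem exampleSystem_split_normal_form :
    (∀ xt : Fin 5 → ℝ, hInv (hMap xt) = xt) ∧
    (∀ x : Fin 5 → ℝ, hMap (hInv x) = x) ∧
    (∀ xt : Fin 5 → ℝ, xt 3 ≠ -1 → ∀ v w : ℝ,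
      hInv (exampleSystem (hMap xt, ![v, w - xt 3])) =
        ![(-(xt 1) * (v + 1) + xt 4 * (xt 3 + 1)) / (xt 3 + 1),
          xt 3 * (v + 1),
          -(xt 0) + xt 3 - 1,
          v,
          w]) := by
  refine ⟨fun xt => ?_, fun x => ?_, fun xt h v w => ?_⟩
  · funext i; fin_cases i <;> simp [hInv, hMap] <;> ring
  · funext i; fin_cases i <;> simp [hInv, hMap] <;> ring
  · have h' : xt 3 + 1 ≠ 0 := fun hc => h (by linarith)
    funext i; fin_cases i <;>
      simp only [hInv, hMap, exampleSystem, Matrix.cons_val_zero, Matrix.cons_val_one,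
        Matrix.head_cons, Matrix.cons_val_two, Matrix.tail_cons, Matrix.cons_val_three,
        Matrix.cons_val_four, Matrix.cons_val_fin_one, Fin.isValue] <;>
      field_simp <;> ring
end

section
/- The example system f : {(x,u) ∈ ℝ^5 × ℝ^2 : x^2 ≠ −1} → ℝ^5, f(x,u) = ( x^2(u^1+1), u^1, x^4+u^2−1, x^5+1−x^1(u^1+1)/(x^2+1), u^2+x^2 ), is flat with flat outputs y^1 = (x^2+1)/x^1 and y^2 = x^5 − x^3: there exist an integer r ≥ 1, a nonempty open set U ⊆ (ℝ^m)^{r+1} (with m = 2) and a smooth submersion F = (F_x, F_u) : U → ℝ^5 × ℝ^2 with F_x taking values in {x^2 ≠ −1, x^1 ≠ 0}, such that F_x(y_1, …, y_{r+1}) = f(F_x(y_0, …, y_r), F_u(y_0, …, y_r)) whenever both argument tuples lie in U, and moreover ( (F_x^2(y)+1)/F_x^1(y), F_x^5(y) − F_x^3(y) ) = y_0 for all y ∈ U. -/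
noncomputable def myFx (y : Fin 4 → Fin 2 → ℝ) : Fin 5 → ℝ :=
  ![(1 / y 1 0 + 1) / y 0 0,
    1 / y 1 0,
    1 / y 2 0 + (1 / y 2 0 + 1) / y 0 0 - y 2 1 - y 0 1,
    1 / y 1 0 + 1 - y 1 1,
    1 / y 2 0 + (1 / y 2 0 + 1) / y 0 0 - y 2 1]

noncomputable def myFu (y : Fin 4 → Fin 2 → ℝ) : Fin 2 → ℝ :=
  ![1 / y 2 0,
    1 / y 3 0 + (1 / y 3 0 + 1) / y 1 0 - 1 / y 1 0 - y 3 1]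

def myU : Set (Fin 4 → Fin 2 → ℝ) :=
  {y | y 0 0 ≠ 0 ∧ y 1 0 ≠ 0 ∧ y 2 0 ≠ 0 ∧ y 3 0 ≠ 0 ∧ y 1 0 ≠ -1}

abbrev E := ((Fin 5 → ℝ) × (Fin 2 → ℝ)) × ℝ

noncomputable def myPsi (p : E) : Fin 4 → Fin 2 → ℝ :=
  ![![(p.1.1 1 + 1) / p.1.1 0, p.1.1 4 - p.1.1 2],
    ![1 / p.1.1 1, p.1.1 1 - p.1.1 3 + 1],
    ![1 / p.1.2 0, p.1.2 0 + p.1.1 0 * (p.1.2 0 + 1) / (p.1.1 1 + 1) - p.1.1 4],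
    ![p.2, (1 + p.1.1 1) / p.2 - p.1.2 1]]

noncomputable def myPhi (y : Fin 4 → Fin 2 → ℝ) : E := ((myFx y, myFu y), y 3 0)

def myV : Set E :=
  {p | p.1.1 0 ≠ 0 ∧ p.1.1 1 ≠ 0 ∧ p.1.1 1 + 1 ≠ 0 ∧ p.1.2 0 ≠ 0 ∧ p.2 ≠ 0}

lemma myU_open : IsOpen myU := by
  have h : ∀ (i : Fin 4) (j : Fin 2) (c : ℝ),
      IsOpen {y : Fin 4 → Fin 2 → ℝ | y i j ≠ c} := by
    intro i j c
    have : Continuous fun y : Fin 4 → Fin 2 → ℝ => y i j :=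
      (continuous_apply j).comp (continuous_apply i)
    exact isOpen_ne.preimage this
  have : myU = {y : Fin 4 → Fin 2 → ℝ | y 0 0 ≠ 0} ∩ ({y | y 1 0 ≠ 0} ∩
      ({y | y 2 0 ≠ 0} ∩ ({y | y 3 0 ≠ 0} ∩ {y | y 1 0 ≠ -1}))) := by
    ext y; simp [myU]
  rw [this]
  exact (h 0 0 0).inter ((h 1 0 0).inter ((h 2 0 0).inter ((h 3 0 0).inter (h 1 0 (-1)))))

lemma myV_open : IsOpen myV := by
  have hx : Continuous fun p : E => p.1.1 := continuous_fst.fst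
  have h1 : ∀ (i : Fin 5) (c : ℝ), IsOpen {p : E | p.1.1 i ≠ c} := fun i c =>
    isOpen_ne.preimage ((continuous_apply i).comp hx)
  have h2 : IsOpen {p : E | p.1.1 1 + 1 ≠ 0} :=
    isOpen_ne.preimage (((continuous_apply (1 : Fin 5)).comp hx).add continuous_const)
  have h3 : IsOpen {p : E | p.1.2 0 ≠ 0} :=
    isOpen_ne.preimage ((continuous_apply (0 : Fin 2)).comp continuous_fst.snd)
  have h4 : IsOpen {p : E | p.2 ≠ 0} := isOpen_ne.preimage continuous_snd
  have : myV = {p : E | p.1.1 0 ≠ 0} ∩ ({p | p.1.1 1 ≠ 0} ∩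
      ({p | p.1.1 1 + 1 ≠ 0} ∩ ({p | p.1.2 0 ≠ 0} ∩ {p | p.2 ≠ 0}))) := by
    ext p; simp [myV]
  rw [this]
  exact (h1 0 0).inter ((h1 1 0).inter (h2.inter (h3.inter h4)))

lemma myFx_facts {y : Fin 4 → Fin 2 → ℝ} (hy : y ∈ myU) :
    myFx y 0 ≠ 0 ∧ myFx y 1 ≠ 0 ∧ myFx y 1 + 1 ≠ 0 ∧ myFu y 0 ≠ 0 ∧ myFx y 1 ≠ -1 := by
  obtain ⟨h0, h1, h2, h3, h4⟩ := hy
  have h1' : y 1 0 + 1 ≠ 0 := by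
    intro h; apply h4; linarith
  have key : 1 / y 1 0 + 1 ≠ 0 := by
    intro h
    apply h1'
    field_simp at h
    linarith
  refine ⟨?_, ?_, ?_, ?_, ?_⟩
  · show (1 / y 1 0 + 1) / y 0 0 ≠ 0
    exact div_ne_zero key h0
  · show 1 / y 1 0 ≠ 0
    exact one_div_ne_zero h1
  · show 1 / y 1 0 + 1 ≠ 0
    exact key
  · show 1 / y 2 0 ≠ 0
    exact one_div_ne_zero h2
  · show 1 / y 1 0 ≠ -1
    intro h
    apply key
    rw [h]; ring

lemma myPsiPhi {y : Fin 4 → Fin 2 → ℝ} (hy : y ∈ myU) : myPsi (myPhi y) = y := by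
  obtain ⟨h0, h1, h2, h3, h4⟩ := hy
  have h1' : 1 + y 1 0 ≠ 0 := by intro h; apply h4; linarith
  have key : 1 / y 1 0 + 1 ≠ 0 := by
    intro h; apply h1'; field_simp at h; linarith
  have c00 : myPsi (myPhi y) 0 0 = y 0 0 := by
    show (1 / y 1 0 + 1) / ((1 / y 1 0 + 1) / y 0 0) = y 0 0
    rw [div_div_eq_mul_div, mul_comm, mul_div_assoc, div_self key, mul_one]
  have c01 : myPsi (myPhi y) 0 1 = y 0 1 := by
    show (1 / y 2 0 + (1 / y 2 0 + 1) / y 0 0 - y 2 1) -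
      (1 / y 2 0 + (1 / y 2 0 + 1) / y 0 0 - y 2 1 - y 0 1) = y 0 1
    ring
  have c10 : myPsi (myPhi y) 1 0 = y 1 0 := one_div_one_div _
  have c11 : myPsi (myPhi y) 1 1 = y 1 1 := by
    show 1 / y 1 0 - (1 / y 1 0 + 1 - y 1 1) + 1 = y 1 1
    ring
  have c20 : myPsi (myPhi y) 2 0 = y 2 0 := one_div_one_div _
  have c21 : myPsi (myPhi y) 2 1 = y 2 1 := by
    show 1 / y 2 0 + ((1 / y 1 0 + 1) / y 0 0) * (1 / y 2 0 + 1) / (1 / y 1 0 + 1) -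
      (1 / y 2 0 + (1 / y 2 0 + 1) / y 0 0 - y 2 1) = y 2 1
    field_simp
    ring
  have c30 : myPsi (myPhi y) 3 0 = y 3 0 := rfl
  have c31 : myPsi (myPhi y) 3 1 = y 3 1 := by
    show (1 + 1 / y 1 0) / y 3 0 -
      (1 / y 3 0 + (1 / y 3 0 + 1) / y 1 0 - 1 / y 1 0 - y 3 1) = y 3 1
    field_simp
    ring
  funext i j
  fin_cases i <;> fin_cases j
  · exact c00
  · exact c01
  · exact c10
  · exact c11
  · exact c20
  · exact c21
  · exact c30
  · exact c31

lemma myPhiPsi {p : E} (hp : p ∈ myV) : myPhi (myPsi p) = p := by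
  obtain ⟨h0, h1, h1', hu, ht⟩ := hp
  set x := p.1.1 with hx
  set u := p.1.2 with hu'
  have e0 : myFx (myPsi p) 0 = x 0 := by
    show (1 / (1 / x 1) + 1) / ((x 1 + 1) / x 0) = x 0
    rw [one_div_one_div]
    rw [div_div_eq_mul_div, mul_comm, mul_div_assoc, div_self h1', mul_one]
  have e1 : myFx (myPsi p) 1 = x 1 := one_div_one_div _
  have e4 : myFx (myPsi p) 4 = x 4 := by
    show 1 / (1 / u 0) + (1 / (1 / u 0) + 1) / ((x 1 + 1) / x 0) -
      (u 0 + x 0 * (u 0 + 1) / (x 1 + 1) - x 4) = x 4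
    rw [one_div_one_div]
    field_simp
    ring
  have e2 : myFx (myPsi p) 2 = x 2 := by
    have : myFx (myPsi p) 2 = myFx (myPsi p) 4 - (x 4 - x 2) := by
      show (_ - (x 4 - x 2) : ℝ) = _ - (x 4 - x 2)
      rfl
    rw [this, e4]; ring
  have e3 : myFx (myPsi p) 3 = x 3 := by
    show 1 / (1 / x 1) + 1 - (x 1 - x 3 + 1) = x 3
    rw [one_div_one_div]; ring
  have f0 : myFu (myPsi p) 0 = u 0 := one_div_one_div _
  have f1 : myFu (myPsi p) 1 = u 1 := by
    show 1 / p.2 + (1 / p.2 + 1) / (1 / x 1) - 1 / (1 / x 1) -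
      ((1 + x 1) / p.2 - u 1) = u 1
    rw [one_div_one_div, div_div_eq_mul_div, div_one]
    field_simp
    ring
  have hfx : myFx (myPsi p) = x := by
    funext i
    fin_cases i
    · exact e0
    · exact e1
    · exact e2
    · exact e3
    · exact e4
  have hfu : myFu (myPsi p) = u := by
    funext j
    fin_cases j
    · exact f0
    · exact f1
  show ((myFx (myPsi p), myFu (myPsi p)), myPsi p 3 0) = p
  rw [hfx, hfu]
  have : myPsi p 3 0 = p.2 := rfl
  rw [this]

lemma ev_contDiff (i : Fin 4) (j : Fin 2) :
    ContDiff ℝ (⊤ : ℕ∞) (fun y : Fin 4 → Fin 2 → ℝ => y i j) :=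
  ((ContinuousLinearMap.proj j :
      (Fin 2 → ℝ) →L[ℝ] ℝ).comp
    (ContinuousLinearMap.proj i :
      (Fin 4 → Fin 2 → ℝ) →L[ℝ] (Fin 2 → ℝ))).contDiff

lemma smooth_main : ContDiffOn ℝ (⊤ : ℕ∞) (fun y => (myFx y, myFu y)) myU := by
  have h0 : ∀ y ∈ myU, y 0 0 ≠ 0 := fun y hy => hy.1
  have h1 : ∀ y ∈ myU, y 1 0 ≠ 0 := fun y hy => hy.2.1
  have h2 : ∀ y ∈ myU, y 2 0 ≠ 0 := fun y hy => hy.2.2.1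
  have h3 : ∀ y ∈ myU, y 3 0 ≠ 0 := fun y hy => hy.2.2.2.1
  have e : ∀ (i : Fin 4) (j : Fin 2),
      ContDiffOn ℝ (⊤ : ℕ∞) (fun y : Fin 4 → Fin 2 → ℝ => y i j) myU :=
    fun i j => (ev_contDiff i j).contDiffOn
  have inv1 : ContDiffOn ℝ (⊤ : ℕ∞) (fun y : Fin 4 → Fin 2 → ℝ => 1 / y 1 0) myU :=
    ContDiffOn.div contDiffOn_const (e 1 0) h1
  have inv2 : ContDiffOn ℝ (⊤ : ℕ∞) (fun y : Fin 4 → Fin 2 → ℝ => 1 / y 2 0) myU :=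
    ContDiffOn.div contDiffOn_const (e 2 0) h2
  have inv3 : ContDiffOn ℝ (⊤ : ℕ∞) (fun y : Fin 4 → Fin 2 → ℝ => 1 / y 3 0) myU :=
    ContDiffOn.div contDiffOn_const (e 3 0) h3
  have q0 : ContDiffOn ℝ (⊤ : ℕ∞)
      (fun y : Fin 4 → Fin 2 → ℝ => (1 / y 1 0 + 1) / y 0 0) myU :=
    ContDiffOn.div (inv1.add contDiffOn_const) (e 0 0) h0
  have q1 : ContDiffOn ℝ (⊤ : ℕ∞)
      (fun y : Fin 4 → Fin 2 → ℝ => (1 / y 2 0 + 1) / y 0 0) myU :=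
    ContDiffOn.div (inv2.add contDiffOn_const) (e 0 0) h0
  have q2 : ContDiffOn ℝ (⊤ : ℕ∞)
      (fun y : Fin 4 → Fin 2 → ℝ => (1 / y 3 0 + 1) / y 1 0) myU :=
    ContDiffOn.div (inv3.add contDiffOn_const) (e 1 0) h1
  apply ContDiffOn.prodMk
  · rw [contDiffOn_pi]
    intro i
    fin_cases i
    · exact q0
    · exact inv1
    · exact ((inv2.add q1).sub (e 2 1)).sub (e 0 1)
    · exact (inv1.add contDiffOn_const).sub (e 1 1)
    · exact (inv2.add q1).sub (e 2 1)
  · rw [contDiffOn_pi]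
    intro j
    fin_cases j
    · exact inv2
    · exact ((inv3.add q2).sub inv1).sub (e 3 1)

lemma myPsi_diff {q : E} (hq : q ∈ myV) : DifferentiableAt ℝ myPsi q := by
  obtain ⟨h0, h1, h1', hu0, ht⟩ := hq
  have hx : ∀ i : Fin 5, DifferentiableAt ℝ (fun p : E => p.1.1 i) q :=
    fun i => ((ContinuousLinearMap.proj i : (Fin 5 → ℝ) →L[ℝ] ℝ).comp
      ((ContinuousLinearMap.fst ℝ (Fin 5 → ℝ) (Fin 2 → ℝ)).comp
        (ContinuousLinearMap.fst ℝ ((Fin 5 → ℝ) × (Fin 2 → ℝ)) ℝ))).differentiableAt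
  have hu : ∀ j : Fin 2, DifferentiableAt ℝ (fun p : E => p.1.2 j) q :=
    fun j => ((ContinuousLinearMap.proj j : (Fin 2 → ℝ) →L[ℝ] ℝ).comp
      ((ContinuousLinearMap.snd ℝ (Fin 5 → ℝ) (Fin 2 → ℝ)).comp
        (ContinuousLinearMap.fst ℝ ((Fin 5 → ℝ) × (Fin 2 → ℝ)) ℝ))).differentiableAt
  have hts : DifferentiableAt ℝ (fun p : E => p.2) q :=
    (ContinuousLinearMap.snd ℝ ((Fin 5 → ℝ) × (Fin 2 → ℝ)) ℝ).differentiableAt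
  have a11 : DifferentiableAt ℝ (fun p : E => p.1.1 1 + 1) q := (hx 1).add_const 1
  have one : DifferentiableAt ℝ (fun _ : E => (1 : ℝ)) q := differentiableAt_const 1
  have d00 : DifferentiableAt ℝ (fun p : E => myPsi p 0 0) q := by
    show DifferentiableAt ℝ (fun p : E => (p.1.1 1 + 1) / p.1.1 0) q
    simp only [div_eq_mul_inv]
    exact a11.mul ((hx 0).inv h0)
  have d01 : DifferentiableAt ℝ (fun p : E => myPsi p 0 1) q := by
    show DifferentiableAt ℝ (fun p : E => p.1.1 4 - p.1.1 2) q
    exact (hx 4).sub (hx 2)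
  have d10 : DifferentiableAt ℝ (fun p : E => myPsi p 1 0) q := by
    show DifferentiableAt ℝ (fun p : E => 1 / p.1.1 1) q
    simp only [div_eq_mul_inv]
    exact one.mul ((hx 1).inv h1)
  have d11 : DifferentiableAt ℝ (fun p : E => myPsi p 1 1) q := by
    show DifferentiableAt ℝ (fun p : E => p.1.1 1 - p.1.1 3 + 1) q
    exact ((hx 1).sub (hx 3)).add_const 1
  have d20 : DifferentiableAt ℝ (fun p : E => myPsi p 2 0) q := by
    show DifferentiableAt ℝ (fun p : E => 1 / p.1.2 0) q
    simp only [div_eq_mul_inv]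
    exact one.mul ((hu 0).inv hu0)
  have d21 : DifferentiableAt ℝ (fun p : E => myPsi p 2 1) q := by
    show DifferentiableAt ℝ
      (fun p : E => p.1.2 0 + p.1.1 0 * (p.1.2 0 + 1) / (p.1.1 1 + 1) - p.1.1 4) q
    have num : DifferentiableAt ℝ (fun p : E => p.1.1 0 * (p.1.2 0 + 1)) q :=
      (hx 0).mul ((hu 0).add_const 1)
    have frac : DifferentiableAt ℝ
        (fun p : E => p.1.1 0 * (p.1.2 0 + 1) / (p.1.1 1 + 1)) q := by
      simp only [div_eq_mul_inv]
      exact num.mul (a11.inv h1')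
    exact ((hu 0).add frac).sub (hx 4)
  have d30 : DifferentiableAt ℝ (fun p : E => myPsi p 3 0) q := hts
  have d31 : DifferentiableAt ℝ (fun p : E => myPsi p 3 1) q := by
    show DifferentiableAt ℝ (fun p : E => (1 + p.1.1 1) / p.2 - p.1.2 1) q
    have num : DifferentiableAt ℝ (fun p : E => 1 + p.1.1 1) q := one.add (hx 1)
    have frac : DifferentiableAt ℝ (fun p : E => (1 + p.1.1 1) / p.2) q := by
      simp only [div_eq_mul_inv]
      exact num.mul (hts.inv ht)
    exact frac.sub (hu 1)
  rw [differentiableAt_pi]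
  intro i
  rw [differentiableAt_pi]
  intro j
  fin_cases i <;> fin_cases j
  · exact d00
  · exact d01
  · exact d10
  · exact d11
  · exact d20
  · exact d21
  · exact d30
  · exact d31

lemma my_surj {y : Fin 4 → Fin 2 → ℝ} (hy : y ∈ myU) :
    Function.Surjective ⇑(fderiv ℝ (fun z => (myFx z, myFu z)) y) := by
  obtain ⟨g0, g1, g2, g3, g4⟩ := myFx_facts hy
  have h1' : myFx y 1 + 1 ≠ 0 := g2
  have hPhiV : myPhi y ∈ myV := ⟨g0, g1, g2, g3, hy.2.2.2.1⟩
  have hdxu : DifferentiableAt ℝ (fun z => (myFx z, myFu z)) y :=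
    (smooth_main.differentiableOn (by simp)).differentiableAt (myU_open.mem_nhds hy)
  have hdt : DifferentiableAt ℝ (fun z : Fin 4 → Fin 2 → ℝ => z 3 0) y :=
    ((ContinuousLinearMap.proj (0 : Fin 2) : (Fin 2 → ℝ) →L[ℝ] ℝ).comp
      (ContinuousLinearMap.proj (3 : Fin 4) :
        (Fin 4 → Fin 2 → ℝ) →L[ℝ] (Fin 2 → ℝ))).differentiableAt
  have hdPhi : DifferentiableAt ℝ myPhi y := hdxu.prodMk hdt
  set L := fderiv ℝ myPhi y with hLdef
  have hL : HasFDerivAt myPhi L y := hdPhi.hasFDerivAt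
  have hM := (myPsi_diff hPhiV).hasFDerivAt
  set M := fderiv ℝ myPsi (myPhi y) with hMdef
  have hL' : HasFDerivAt myPhi L (myPsi (myPhi y)) := by rw [myPsiPhi hy]; exact hL
  have hcomp : HasFDerivAt (myPhi ∘ myPsi) (L.comp M) (myPhi y) := hL'.comp _ hM
  have hev : (myPhi ∘ myPsi) =ᶠ[nhds (myPhi y)] id :=
    Filter.eventuallyEq_of_mem (myV_open.mem_nhds hPhiV) fun p hp => myPhiPsi hp
  have hid : HasFDerivAt (myPhi ∘ myPsi) (ContinuousLinearMap.id ℝ E) (myPhi y) :=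
    (hasFDerivAt_id _).congr_of_eventuallyEq hev
  have heq : L.comp M = ContinuousLinearMap.id ℝ E := hcomp.unique hid
  have hmain : HasFDerivAt (fun z => (myFx z, myFu z))
      ((ContinuousLinearMap.fst ℝ ((Fin 5 → ℝ) × (Fin 2 → ℝ)) ℝ).comp L) y :=
    ((ContinuousLinearMap.fst ℝ ((Fin 5 → ℝ) × (Fin 2 → ℝ)) ℝ).hasFDerivAt).comp y hL
  rw [hmain.fderiv]
  intro w
  refine ⟨M ((w, 0) : E), ?_⟩
  have hw := DFunLike.congr_fun heq ((w, 0) : E)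
  simp only [ContinuousLinearMap.coe_comp', Function.comp_apply,
    ContinuousLinearMap.coe_id', id_eq] at hw
  simp only [ContinuousLinearMap.coe_comp', Function.comp_apply, hw,
    ContinuousLinearMap.coe_fst']

lemma my_flat (y : Fin 5 → Fin 2 → ℝ)
    (hc : (fun i : Fin 4 => y i.castSucc) ∈ myU)
    (hs : (fun i : Fin 4 => y i.succ) ∈ myU) :
    myFx (fun i => y i.succ) =
      exampleSystem (myFx (fun i => y i.castSucc), myFu (fun i => y i.castSucc)) := by
  have a0 : y 0 0 ≠ 0 := hc.1
  have a1 : y 1 0 ≠ 0 := hc.2.1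
  have a2 : y 2 0 ≠ 0 := hc.2.2.1
  have a3 : y 3 0 ≠ 0 := hc.2.2.2.1
  have a1' : y 1 0 ≠ -1 := hc.2.2.2.2
  have h1' : 1 + y 1 0 ≠ 0 := by intro h; apply a1'; linarith
  have key : 1 / y 1 0 + 1 ≠ 0 := by
    intro h; apply h1'; field_simp at h; linarith
  have t0 : myFx (fun i => y i.succ) 0 =
      exampleSystem (myFx (fun i => y i.castSucc), myFu (fun i => y i.castSucc)) 0 := by
    show (1 / y 2 0 + 1) / y 1 0 = (1 / y 1 0) * (1 / y 2 0 + 1)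
    rw [div_eq_mul_inv, div_eq_mul_inv, one_mul, mul_comm, one_div]
  have t1 : myFx (fun i => y i.succ) 1 =
      exampleSystem (myFx (fun i => y i.castSucc), myFu (fun i => y i.castSucc)) 1 := rfl
  have t2 : myFx (fun i => y i.succ) 2 =
      exampleSystem (myFx (fun i => y i.castSucc), myFu (fun i => y i.castSucc)) 2 := by
    show 1 / y 3 0 + (1 / y 3 0 + 1) / y 1 0 - y 3 1 - y 1 1 =
      (1 / y 1 0 + 1 - y 1 1) +
        (1 / y 3 0 + (1 / y 3 0 + 1) / y 1 0 - 1 / y 1 0 - y 3 1) - 1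
    ring
  have t3 : myFx (fun i => y i.succ) 3 =
      exampleSystem (myFx (fun i => y i.castSucc), myFu (fun i => y i.castSucc)) 3 := by
    show 1 / y 2 0 + 1 - y 2 1 =
      (1 / y 2 0 + (1 / y 2 0 + 1) / y 0 0 - y 2 1) + 1 -
        ((1 / y 1 0 + 1) / y 0 0) * (1 / y 2 0 + 1) / (1 / y 1 0 + 1)
    field_simp
    ring
  have t4 : myFx (fun i => y i.succ) 4 =
      exampleSystem (myFx (fun i => y i.castSucc), myFu (fun i => y i.castSucc)) 4 := by
    show 1 / y 3 0 + (1 / y 3 0 + 1) / y 1 0 - y 3 1 =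
      (1 / y 3 0 + (1 / y 3 0 + 1) / y 1 0 - 1 / y 1 0 - y 3 1) + 1 / y 1 0
    ring
  funext i
  fin_cases i
  · exact t0
  · exact t1
  · exact t2
  · exact t3
  · exact t4

lemma my_out {y : Fin 4 → Fin 2 → ℝ} (hy : y ∈ myU) :
    ![(myFx y 1 + 1) / myFx y 0, myFx y 4 - myFx y 2] = y 0 := by
  obtain ⟨h0, h1, h2, h3, h4⟩ := hy
  have h1' : 1 + y 1 0 ≠ 0 := by intro h; apply h4; linarith
  have key : 1 / y 1 0 + 1 ≠ 0 := by
    intro h; apply h1'; field_simp at h; linarith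
  have o0 : (myFx y 1 + 1) / myFx y 0 = y 0 0 := by
    show (1 / y 1 0 + 1) / ((1 / y 1 0 + 1) / y 0 0) = y 0 0
    rw [div_div_eq_mul_div, mul_comm, mul_div_assoc, div_self key, mul_one]
  have o1 : myFx y 4 - myFx y 2 = y 0 1 := by
    show (1 / y 2 0 + (1 / y 2 0 + 1) / y 0 0 - y 2 1) -
      (1 / y 2 0 + (1 / y 2 0 + 1) / y 0 0 - y 2 1 - y 0 1) = y 0 1
    ring
  funext j
  fin_cases j
  · exact o0
  · exact o1

/-- The example system is flat with flat outputs `y¹ = (x²+1)/x¹` and `y² = x⁵ − x³`: there are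
`r ≥ 1`, a nonempty open `U ⊆ (ℝ²)^{r+1}` and a smooth submersion `F = (Fx, Fu) : U → ℝ⁵ × ℝ²`
with `Fx` valued in `{x² ≠ −1, x¹ ≠ 0}`, satisfying the flat-parametrization identity
`Fx (y₁, …, y_{r+1}) = f (Fx (y₀, …, y_r), Fu (y₀, …, y_r))` whenever both argument tuples
lie in `U`, and `((Fx² + 1)/Fx¹, Fx⁵ − Fx³) = y₀` on `U`. -/
theorem exampleSystem_is_flat :
    ∃ (r : ℕ), 1 ≤ r ∧
    ∃ U : Set (Fin (r + 1) → Fin 2 → ℝ), IsOpen U ∧ U.Nonempty ∧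
    ∃ (Fx : (Fin (r + 1) → Fin 2 → ℝ) → Fin 5 → ℝ)
      (Fu : (Fin (r + 1) → Fin 2 → ℝ) → Fin 2 → ℝ),
      ContDiffOn ℝ (⊤ : ℕ∞) (fun y => (Fx y, Fu y)) U ∧
      (∀ y ∈ U, Function.Surjective ⇑(fderiv ℝ (fun z => (Fx z, Fu z)) y)) ∧
      (∀ y ∈ U, Fx y 1 ≠ -1 ∧ Fx y 0 ≠ 0) ∧
      (∀ y : Fin (r + 2) → Fin 2 → ℝ,
        (fun i : Fin (r + 1) => y i.castSucc) ∈ U →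
        (fun i : Fin (r + 1) => y i.succ) ∈ U →
        Fx (fun i => y i.succ) =
          exampleSystem (Fx (fun i => y i.castSucc), Fu (fun i => y i.castSucc))) ∧
      (∀ y ∈ U, ![(Fx y 1 + 1) / Fx y 0, Fx y 4 - Fx y 2] = y 0) := by
  refine ⟨3, by norm_num, myU, myU_open, ⟨fun _ _ => 1, ?_⟩, myFx, myFu, smooth_main,
    fun y hy => my_surj hy,
    fun y hy => ⟨(myFx_facts hy).2.2.2.2, (myFx_facts hy).1⟩,
    fun y hc hs => my_flat y hc hs,
    fun y hy => my_out hy⟩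
  exact ⟨one_ne_zero, one_ne_zero, one_ne_zero, one_ne_zero, by norm_num⟩
end
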